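/- Let γ, μ, τ > 0 and A, Q ∈ ℝ with Q = 0 and A < 0, and suppose that γ > μ or μτ·|A| < γ. Then every λ ∈ ℂ satisfying the characteristic equation Δ(λ) = 0 has Re λ < 0. -/

import Mathlib

/-- The characteristic function `Δ(λ) = λ + γ - A - (Q - A) e^{-λτ} - μA ∫_{-τ}^0 e^{λs} ds`
of the linearization of the threshold delay equation at a steady state. -/
noncomputable def charFun (γ μ τ A Q : ℝ) (lam : ℂ) : ℂ :=
  lam + (γ : ℂ) - (A : ℂ) - ((Q : ℂ) - (A : ℂ)) * Complex.exp (-lam * (τ : ℂ)) -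
    (μ : ℂ) * (A : ℂ) * ∫ s in (-τ)..(0 : ℝ), Complex.exp (lam * (s : ℂ))

/-- Key elementary inequality: `e^{-t} (t sin θ + θ cos θ) ≤ θ` for `t, θ ≥ 0`. -/
lemma charFun_aux_ineq (t θ : ℝ) (ht : 0 ≤ t) (hθ : 0 ≤ θ) :
    Real.exp (-t) * (t * Real.sin θ + θ * Real.cos θ) ≤ θ := by
  have h1 : Real.sin θ ≤ θ := Real.sin_le hθ
  have h2 : Real.cos θ ≤ 1 := Real.cos_le_one θ
  have h3 : 1 + t ≤ Real.exp t := by linarith [Real.add_one_le_exp t]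
  have h4 : Real.exp (-t) * Real.exp t = 1 := by rw [← Real.exp_add]; simp
  have h5 : 0 < Real.exp (-t) := Real.exp_pos _
  nlinarith [mul_le_mul_of_nonneg_left h1 ht, mul_le_mul_of_nonneg_left h2 hθ,
    mul_le_mul_of_nonneg_left h3 (mul_nonneg h5.le hθ)]

set_option maxHeartbeats 2000000 in
/-- Real-variable endgame for the case `μ < γ`. -/
lemma charFun_case1_real (γ μ τ A x y r c s : ℝ) (hγ : 0 < γ) (hμ : 0 < μ) (hτ : 0 < τ)
    (hA : A < 0) (hcond : μ < γ) (hx : 0 ≤ x) (hxy : x ≠ 0 ∨ y ≠ 0)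
    (hr : r = Real.exp (-(x*τ))) (hc : c = Real.cos (y*τ)) (hs : s = Real.sin (y*τ))
    (hR' : x^2 - y^2 + γ*x = A*((x+μ)*(1-r*c) - y*(r*s)))
    (hIm' : 2*x*y + γ*y = A*((x+μ)*(r*s) + y*(1-r*c))) : False := by
  have hstar : (x^2+y^2)*y*(μ-γ) = A*((x+μ)^2+y^2)*(r*(x*s+y*c) - y) := by
    linear_combination (x^2 - y^2 + μ*x) * hIm' - (2*x*y + μ*y) * hR'
  have hr1 : r ≤ 1 := by rw [hr]; exact Real.exp_le_one_iff.mpr (by nlinarith)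
  have hr0 : 0 < r := hr ▸ Real.exp_pos _
  have hNw : 0 < (x+μ)^2 + y^2 := by
    nlinarith [sq_nonneg y, pow_pos (show (0:ℝ) < x + μ by linarith) 2]
  have hAN : A * ((x+μ)^2 + y^2) < 0 := mul_neg_of_neg_of_pos hA hNw
  rcases lt_trichotomy y 0 with hy0 | hy0 | hy0
  · have key := charFun_aux_ineq (x*τ) (-(y*τ)) (by positivity) (by nlinarith)
    rw [Real.sin_neg, Real.cos_neg, ← hs, ← hc, ← hr] at key
    have h1' : τ * y ≤ τ * (r*(x*s+y*c)) := by nlinarith [key]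
    have h1 : y ≤ r*(x*s+y*c) := le_of_mul_le_mul_left h1' hτ
    have h2 : A*((x+μ)^2+y^2)*(r*(x*s+y*c) - y) ≤ 0 :=
      mul_nonpos_of_nonpos_of_nonneg hAN.le (by linarith)
    have hN : 0 < x^2 + y^2 := by
      nlinarith [sq_nonneg x, mul_pos (neg_pos.mpr hy0) (neg_pos.mpr hy0)]
    nlinarith [mul_pos (mul_pos hN (neg_pos.mpr hy0)) (sub_pos.mpr hcond)]
  · have hx0 : 0 < x := by
      rcases hx.lt_or_eq with h | h
      · exact h
      · exact absurd (Or.resolve_right hxy (by simp [hy0])) (by simp [← h])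
    have hc1 : c = 1 := by rw [hc, hy0]; simp
    have hs0 : s = 0 := by rw [hs, hy0]; simp
    rw [hy0, hc1, hs0] at hR'
    have hfac : A*((x+μ)*(1-r*1) - 0*(r*0)) ≤ 0 := by
      nlinarith [mul_nonneg (mul_nonneg (by linarith : (0:ℝ) ≤ -A)
        (by linarith : (0:ℝ) ≤ x+μ)) (by linarith : (0:ℝ) ≤ 1 - r)]
    nlinarith [hR', hfac, mul_pos hγ hx0]
  · have key := charFun_aux_ineq (x*τ) (y*τ) (by positivity) (by positivity)
    rw [← hs, ← hc, ← hr] at key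
    have h1' : τ * (r*(x*s+y*c)) ≤ τ * y := by nlinarith [key]
    have h1 : r*(x*s+y*c) ≤ y := le_of_mul_le_mul_left h1' hτ
    have h2 : 0 ≤ A*((x+μ)^2+y^2)*(r*(x*s+y*c) - y) := by
      nlinarith [mul_nonneg (neg_nonneg.mpr hAN.le)
        (neg_nonneg.mpr (by linarith : r*(x*s+y*c) - y ≤ 0))]
    have hN : 0 < x^2 + y^2 := by nlinarith [sq_nonneg x, mul_pos hy0 hy0]
    nlinarith [mul_pos (mul_pos hN hy0) (sub_pos.mpr hcond)]

/-- If `Q = 0`, `A < 0`, and either `γ > μ` or `μτ|A| < γ`, then every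
root of the characteristic equation `Δ(λ) = 0` has negative real part. -/
theorem charFun_roots_neg_re_of_A_neg
    (γ μ τ A Q : ℝ) (hγ : 0 < γ) (hμ : 0 < μ) (hτ : 0 < τ)
    (hQ : Q = 0) (hA : A < 0) (hcond : μ < γ ∨ μ * τ * |A| < γ) :
    ∀ lam : ℂ, charFun γ μ τ A Q lam = 0 → lam.re < 0 := by
  subst hQ
  intro lam hroot
  by_contra hre'
  push_neg at hre'
  have hre : 0 ≤ lam.re := hre'
  rcases hcond with hcond | hcond
  · -- case μ < γ
    have hlam0 : lam ≠ 0 := by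
      intro h0
      rw [h0] at hroot
      simp only [charFun, zero_mul, neg_zero, zero_add, Complex.exp_zero, mul_one,
        Complex.ofReal_zero, zero_sub, zero_mul, Complex.exp_zero,
        intervalIntegral.integral_const, smul_eq_mul, mul_one, sub_neg_eq_add] at hroot
      have h := congrArg Complex.re hroot
      simp [Complex.mul_re, Complex.sub_re, Complex.add_re] at h
      nlinarith [mul_pos hμ hτ]
    have hI : (∫ s in (-τ)..(0 : ℝ), Complex.exp (lam * (s : ℂ)))
        = (1 - Complex.exp (-(lam * (τ : ℂ)))) / lam := by
      rw [integral_exp_mul_complex hlam0]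
      push_cast
      rw [mul_zero, Complex.exp_zero]
      ring_nf
    unfold charFun at hroot
    rw [hI] at hroot
    have hkey : lam * (lam + γ)
        = (A : ℂ) * (lam + μ) * (1 - Complex.exp (-(lam * (τ : ℂ)))) := by
      field_simp at hroot
      rw [Complex.ofReal_zero] at hroot
      linear_combination hroot
    have hEre : (Complex.exp (-(lam * (τ : ℂ)))).re
        = Real.exp (-(lam.re * τ)) * Real.cos (lam.im * τ) := by
      rw [Complex.exp_re]
      simp [Complex.mul_re]
    have hEim : (Complex.exp (-(lam * (τ : ℂ)))).im
        = -(Real.exp (-(lam.re * τ)) * Real.sin (lam.im * τ)) := by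
      rw [Complex.exp_im]
      simp [Complex.mul_im, Complex.mul_re]
    have hR := congrArg Complex.re hkey
    have hIm := congrArg Complex.im hkey
    simp only [Complex.mul_re, Complex.mul_im, Complex.add_re, Complex.add_im,
      Complex.sub_re, Complex.sub_im, Complex.one_re, Complex.one_im,
      Complex.ofReal_re, Complex.ofReal_im, hEre, hEim,
      zero_mul, mul_zero, sub_zero, zero_add, add_zero, zero_sub, neg_neg] at hR hIm
    have hxy : lam.re ≠ 0 ∨ lam.im ≠ 0 := by
      by_contra h
      push_neg at h
      exact hlam0 (Complex.ext h.1 h.2)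
    refine charFun_case1_real γ μ τ A lam.re lam.im
      (Real.exp (-(lam.re * τ))) (Real.cos (lam.im * τ)) (Real.sin (lam.im * τ))
      hγ hμ hτ hA hcond hre hxy rfl rfl rfl ?_ ?_
    · linear_combination hR
    · linear_combination hIm
  · -- case μ τ |A| < γ
    have hInorm : ‖∫ s in (-τ)..(0 : ℝ), Complex.exp (lam * (s : ℂ))‖ ≤ τ := by
      have h := intervalIntegral.norm_integral_le_of_norm_le_const (C := 1)
        (f := fun s : ℝ => Complex.exp (lam * (s : ℂ))) (a := -τ) (b := 0) ?_
      · simpa [abs_of_nonneg hτ.le] using h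
      · intro s hs
        rw [Set.uIoc_of_le (by linarith : -τ ≤ (0:ℝ))] at hs
        have hs0 : s ≤ 0 := hs.2
        rw [Complex.norm_exp]
        have : (lam * (s : ℂ)).re = lam.re * s := by simp [Complex.mul_re]
        rw [this]
        exact Real.exp_le_one_iff.mpr (mul_nonpos_of_nonneg_of_nonpos hre hs0)
    have hIre : -τ ≤ (∫ s in (-τ)..(0 : ℝ), Complex.exp (lam * (s : ℂ))).re := by
      have h1 : |(∫ s in (-τ)..(0 : ℝ), Complex.exp (lam * (s : ℂ))).re|
          ≤ ‖∫ s in (-τ)..(0 : ℝ), Complex.exp (lam * (s : ℂ))‖ := Complex.abs_re_le_norm _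
      have := (abs_le.mp (h1.trans hInorm)).1
      linarith
    have hEre : (Complex.exp (-(lam * (τ : ℂ)))).re ≤ 1 := by
      have h1 : (Complex.exp (-(lam * (τ : ℂ)))).re ≤ ‖Complex.exp (-(lam * (τ : ℂ)))‖ :=
        Complex.re_le_norm _
      rw [Complex.norm_exp] at h1
      have h2 : (-(lam * (τ : ℂ))).re = -(lam.re * τ) := by simp [Complex.mul_re]
      rw [h2] at h1
      have : Real.exp (-(lam.re * τ)) ≤ 1 :=
        Real.exp_le_one_iff.mpr (by nlinarith)
      linarith
    have h := congrArg Complex.re hroot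
    simp only [charFun, Complex.add_re, Complex.sub_re, Complex.mul_re, Complex.ofReal_re,
      Complex.ofReal_im, Complex.zero_re, Complex.zero_im, Complex.sub_im, Complex.mul_im,
      zero_mul, mul_zero, sub_zero, zero_sub, neg_mul, neg_neg, zero_add, neg_zero] at h
    have habs : |A| = -A := abs_of_neg hA
    nlinarith [mul_nonneg (by linarith : (0:ℝ) ≤ -A)
        (by linarith : 0 ≤ 1 - (Complex.exp (-(lam * (τ : ℂ)))).re),
      mul_le_mul_of_nonneg_left hIre (by nlinarith : 0 ≤ -(μ*A))]
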